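/- Let G be a bipartite random graph between sets I (|I| = m) and A (|A| = n) where each edge exists independently with probability p, and let mp ≥ 3 ln(n/δ). For a fixed subset C ⊆ A of size k, suppose every neuron in C has at least d incoming edges from I each with weight (1+γ), every neuron outside C has at most m' incoming edges from C∪I with weight at most (1+cγ) and the rest with weight 1, where cm' < d. If γ ≥ (mp + √(3 m p ln(n/δ)) - d)/(d - c m'), then with probability at least 1 - δ, every neuron outside C has weighted input at most mp + √(3 m p ln(n/δ)) + c·γ·m' < (1+γ)d ≤ weighted input of every neuron in C, so the k-cap of the response to I firing equals C. -/

import Mathlib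

open MeasureTheory ENNReal

section AssemblyAux

open Finset

variable {I A : Type} [Fintype I] [Fintype A] [DecidableEq I] [DecidableEq A]

lemma cyl_eq_pi (j : A) (T : Finset I) :
    {ω : I × A → Bool | ∀ i : I, ω (i, j) = decide (i ∈ T)}
      = Set.pi Set.univ (fun x : I × A => if x.2 = j then {decide (x.1 ∈ T)} else Set.univ) := by
  ext ω
  simp only [Set.mem_setOf_eq, Set.mem_pi, Set.mem_univ, forall_true_left, Prod.forall]
  constructor
  · intro h i j'
    by_cases hj : j' = j
    · subst hj; simp [h i]
    · simp [hj]
  · intro h i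
    simpa using h i j

lemma cyl_measurable (j : A) (T : Finset I) :
    MeasurableSet {ω : I × A → Bool | ∀ i : I, ω (i, j) = decide (i ∈ T)} := by
  rw [cyl_eq_pi]
  apply MeasurableSet.univ_pi
  intro x
  split
  · exact measurableSet_singleton _
  · exact MeasurableSet.univ

lemma cyl_meas (p : ℝ≥0∞) (hp : p ≤ 1) (j : A) (T : Finset I) :
    (Measure.pi fun _ : I × A => (PMF.bernoulli p.toNNReal (by simpa using ENNReal.toNNReal_mono ENNReal.one_ne_top hp)).toMeasure)
      {ω : I × A → Bool | ∀ i : I, ω (i, j) = decide (i ∈ T)}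
      = p ^ T.card * (1 - p) ^ (Finset.univ \ T).card := by
  have hpne : p ≠ ⊤ := ne_top_of_le_ne_top one_ne_top hp
  have hp' : p.toNNReal ≤ 1 := by simpa using ENNReal.toNNReal_mono ENNReal.one_ne_top hp
  rw [cyl_eq_pi, Measure.pi_pi, Fintype.prod_prod_type]
  have hstep : ∀ i : I, (∏ j' : A, (PMF.bernoulli p.toNNReal (by simpa using ENNReal.toNNReal_mono ENNReal.one_ne_top hp)).toMeasure
        (if ((i, j') : I × A).2 = j then {decide (((i, j') : I × A).1 ∈ T)} else Set.univ))
      = (if i ∈ T then p else 1 - p) := by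
    intro i
    have h1 : ∀ j' : A, (PMF.bernoulli p.toNNReal (by simpa using ENNReal.toNNReal_mono ENNReal.one_ne_top hp)).toMeasure
        (if j' = j then ({decide (i ∈ T)} : Set Bool) else Set.univ)
        = if j' = j then (PMF.bernoulli p.toNNReal (by simpa using ENNReal.toNNReal_mono ENNReal.one_ne_top hp)) (decide (i ∈ T)) else 1 := by
      intro j'
      split
      · exact PMF.toMeasure_apply_singleton _ _ (measurableSet_singleton _)
      · simp [PMF.bernoulli, PMF.ofFintype_apply, ENNReal.coe_toNNReal hpne, add_tsub_cancel_of_le hp]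
    simp only [h1, Finset.prod_ite_eq', Finset.mem_univ, if_true]
    by_cases hi : i ∈ T <;> simp [hi, PMF.bernoulli, PMF.ofFintype_apply, ENNReal.coe_toNNReal hpne]
  simp only [hstep]
  rw [Finset.prod_ite]
  have h1 : Finset.univ.filter (fun i : I => i ∈ T) = T := by ext i; simp
  have h2 : Finset.univ.filter (fun i : I => ¬ i ∈ T) = Finset.univ \ T := by ext i; simp
  simp [h1, h2]

lemma event_eq_biUnion (P : ℕ → Prop) [DecidablePred P] (j : A) :
    {ω : I × A → Bool | P (Finset.univ.filter fun i : I => ω (i, j) = true).card}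
      = ⋃ T ∈ Finset.univ.filter (fun T : Finset I => P T.card),
          {ω : I × A → Bool | ∀ i : I, ω (i, j) = decide (i ∈ T)} := by
  ext ω
  simp only [Set.mem_setOf_eq, Set.mem_iUnion, Finset.mem_filter, Finset.mem_univ, true_and,
    exists_prop]
  constructor
  · intro h
    exact ⟨Finset.univ.filter fun i : I => ω (i, j) = true, h, fun i => by simp⟩
  · rintro ⟨T, hT, hω⟩
    have hTe : (Finset.univ.filter fun i : I => ω (i, j) = true) = T := by
      ext i; simp [hω i]
    rwa [hTe]

lemma event_meas (p : ℝ≥0∞) (hp : p ≤ 1) (P : ℕ → Prop) [DecidablePred P] (j : A) :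
    (Measure.pi fun _ : I × A => (PMF.bernoulli p.toNNReal (by simpa using ENNReal.toNNReal_mono ENNReal.one_ne_top hp)).toMeasure)
      {ω : I × A → Bool | P (Finset.univ.filter fun i : I => ω (i, j) = true).card}
      = ∑ T ∈ Finset.univ.filter (fun T : Finset I => P T.card),
          p ^ T.card * (1 - p) ^ (Finset.univ \ T).card := by
  rw [event_eq_biUnion P j, measure_biUnion_finset ?_ (fun T _ => cyl_measurable j T)]
  · exact Finset.sum_congr rfl fun T _ => cyl_meas p hp j T
  · intro T hT T' hT' hne
    simp only [Function.onFun, Set.disjoint_left]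
    intro ω h1 h2
    apply hne
    ext i
    have := (h1 i).symm.trans (h2 i)
    simpa using this

lemma count_measurable (j : A) (B : Set ℕ) :
    MeasurableSet {ω : I × A → Bool |
      ((Finset.univ.filter fun i : I => ω (i, j) = true).card : ℕ) ∈ B} := by
  have hc : Measurable fun ω : I × A → Bool =>
      (Finset.univ.filter fun i : I => ω (i, j) = true).card := by
    have : (fun ω : I × A → Bool => (Finset.univ.filter fun i : I => ω (i, j) = true).card)
        = fun ω => ∑ i : I, if ω (i, j) = true then 1 else 0 := by
      funext ω; rw [Finset.card_filter]
    rw [this]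
    exact Finset.measurable_sum _ fun i _ =>
      (measurable_from_top (f := fun b : Bool => if b = true then 1 else 0)).comp
        (measurable_pi_apply _)
  exact hc (show MeasurableSet B from trivial)

lemma tail_bound (p : ℝ≥0∞) (hp : p ≤ 1) (j : A) (tR s B : ℝ) (hs : 0 ≤ s)
    (hB : Real.exp (-(s * tR)) *
        (p.toReal * Real.exp s + (1 - p.toReal)) ^ (Fintype.card I) ≤ B) :
    (Measure.pi fun _ : I × A => (PMF.bernoulli p.toNNReal (by simpa using ENNReal.toNNReal_mono ENNReal.one_ne_top hp)).toMeasure)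
      {ω : I × A → Bool | tR ≤ ((Finset.univ.filter fun i : I => ω (i, j) = true).card : ℝ)}
      ≤ ENNReal.ofReal B := by
  have hpne : p ≠ ⊤ := ne_top_of_le_ne_top one_ne_top hp
  have hpr0 : 0 ≤ p.toReal := ENNReal.toReal_nonneg
  have hpr1 : p.toReal ≤ 1 := by
    have := ENNReal.toReal_mono one_ne_top hp
    simpa using this
  set pr := p.toReal with hprdef
  have hq : (1 : ℝ≥0∞) - p = ENNReal.ofReal (1 - pr) := by
    rw [ENNReal.ofReal_sub _ hpr0, ENNReal.ofReal_one, ENNReal.ofReal_toReal hpne]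
  have hpofReal : p = ENNReal.ofReal pr := (ENNReal.ofReal_toReal hpne).symm
  rw [event_meas p hp (fun c => tR ≤ (c : ℝ)) j]
  set E : ℝ≥0∞ := ENNReal.ofReal (Real.exp s) with hE
  set D : ℝ≥0∞ := ENNReal.ofReal (Real.exp (-(s * tR))) with hD
  have hterm : ∀ T ∈ Finset.univ.filter (fun T : Finset I => tR ≤ (T.card : ℝ)),
      p ^ T.card * (1 - p) ^ (Finset.univ \ T).card
        ≤ D * ((p * E) ^ T.card * (1 - p) ^ (Finset.univ \ T).card) := by
    intro T hT
    have hcard : tR ≤ (T.card : ℝ) := by simpa using hT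
    have hone : (1 : ℝ≥0∞) ≤ D * E ^ T.card := by
      rw [hD, hE, ← ENNReal.ofReal_pow (Real.exp_nonneg _), ← ENNReal.ofReal_mul
        (Real.exp_nonneg _), ← Real.exp_nat_mul, ← Real.exp_add]
      rw [show (1 : ℝ≥0∞) = ENNReal.ofReal (Real.exp 0) by simp]
      apply ENNReal.ofReal_le_ofReal
      apply Real.exp_le_exp.2
      nlinarith [mul_le_mul_of_nonneg_left hcard hs]
    calc p ^ T.card * (1 - p) ^ (Finset.univ \ T).card
        = 1 * (p ^ T.card * (1 - p) ^ (Finset.univ \ T).card) := (one_mul _).symm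
      _ ≤ (D * E ^ T.card) * (p ^ T.card * (1 - p) ^ (Finset.univ \ T).card) :=
          mul_le_mul_left hone _
      _ = D * ((p * E) ^ T.card * (1 - p) ^ (Finset.univ \ T).card) := by ring
  calc (∑ T ∈ Finset.univ.filter (fun T : Finset I => tR ≤ (T.card : ℝ)),
          p ^ T.card * (1 - p) ^ (Finset.univ \ T).card)
      ≤ ∑ T ∈ Finset.univ.filter (fun T : Finset I => tR ≤ (T.card : ℝ)),
          D * ((p * E) ^ T.card * (1 - p) ^ (Finset.univ \ T).card) :=
        Finset.sum_le_sum hterm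
    _ ≤ ∑ T : Finset I, D * ((p * E) ^ T.card * (1 - p) ^ (Finset.univ \ T).card) :=
        Finset.sum_le_sum_of_subset (Finset.filter_subset _ _)
    _ = D * ∑ T ∈ (Finset.univ : Finset I).powerset,
          (∏ _i ∈ T, (p * E)) * ∏ _i ∈ Finset.univ \ T, (1 - p) := by
        rw [Finset.mul_sum, Finset.powerset_univ]
        exact Finset.sum_congr rfl fun T _ => by rw [Finset.prod_const, Finset.prod_const]
    _ = D * (p * E + (1 - p)) ^ (Fintype.card I) := by
        rw [← Finset.prod_add, Finset.prod_const, Finset.card_univ]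
    _ ≤ ENNReal.ofReal B := by
        rw [hD, hE, hq, hpofReal, ← ENNReal.ofReal_mul hpr0, ← ENNReal.ofReal_add
          (by positivity) (by linarith), ← ENNReal.ofReal_pow (by nlinarith [Real.exp_nonneg s]),
          ← ENNReal.ofReal_mul (Real.exp_nonneg _)]
        exact ENNReal.ofReal_le_ofReal hB

lemma chernoff_real (m n : ℕ) (pr δ : ℝ) (hn : 1 ≤ (n : ℝ)) (hδ : 0 < δ) (hδ1 : δ < 1)
    (hpr0 : 0 ≤ pr) (hpr1 : pr ≤ 1)
    (hmp : 3 * Real.log (n / δ) ≤ (m : ℝ) * pr) :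
    Real.exp (-((Real.sqrt (3 * ((m : ℝ) * pr) * Real.log (n / δ)) / (2 * ((m : ℝ) * pr))) *
        ((m : ℝ) * pr + Real.sqrt (3 * ((m : ℝ) * pr) * Real.log (n / δ))))) *
      (pr * Real.exp (Real.sqrt (3 * ((m : ℝ) * pr) * Real.log (n / δ)) / (2 * ((m : ℝ) * pr)))
        + (1 - pr)) ^ m ≤ δ / n := by
  set L := Real.log (n / δ) with hLdef
  set μ := (m : ℝ) * pr with hμdef
  have hL : 0 < L := Real.log_pos ((one_lt_div hδ).2 (by linarith))
  have hμ : 0 < μ := by linarith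
  set a := Real.sqrt (3 * μ * L) with hadef
  have ha0 : 0 ≤ a := Real.sqrt_nonneg _
  have ha2 : a ^ 2 = 3 * μ * L := Real.sq_sqrt (by positivity)
  have haμ : a ≤ μ := by
    have h1 : 3 * μ * L ≤ μ ^ 2 := by nlinarith
    calc a ≤ Real.sqrt (μ ^ 2) := Real.sqrt_le_sqrt h1
      _ = μ := Real.sqrt_sq hμ.le
  set s := a / (2 * μ) with hsdef
  have hs0 : 0 ≤ s := by positivity
  have hs12 : s ≤ 1 / 2 := by
    rw [hsdef, div_le_iff₀ (by positivity)]; linarith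
  have ha' : a = 2 * μ * s := by
    rw [hsdef]; field_simp
  have hLs : 3 * μ * L = 4 * μ ^ 2 * s ^ 2 := by rw [← ha2, ha']; ring
  have hL2 : L = 4 / 3 * (μ * s ^ 2) := by
    apply mul_left_cancel₀ (show (3 : ℝ) * μ ≠ 0 from ne_of_gt (by positivity))
    linear_combination hLs
  have hexp : Real.exp s ≤ 1 + s + s ^ 2 / 2 + s ^ 3 * (2 / 9) := by
    have h := Real.exp_bound' hs0 (by linarith) (n := 3) (by norm_num)
    simp only [Finset.sum_range_succ, Finset.sum_range_zero] at h
    norm_num [Nat.factorial] at h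
    linarith
  have key : μ * (Real.exp s - 1) - s * (μ + a) ≤ -L := by
    nlinarith [mul_le_mul_of_nonneg_left hexp hμ.le,
      mul_nonneg (mul_nonneg hμ.le (sq_nonneg s)) (show (0:ℝ) ≤ 3/4 - s by linarith)]
  have hbase0 : 0 ≤ pr * Real.exp s + (1 - pr) :=
    add_nonneg (mul_nonneg hpr0 (Real.exp_nonneg _)) (by linarith)
  have hbase : pr * Real.exp s + (1 - pr) ≤ Real.exp (pr * (Real.exp s - 1)) := by
    have := Real.add_one_le_exp (pr * (Real.exp s - 1))
    linarith
  calc Real.exp (-(s * (μ + a))) * (pr * Real.exp s + (1 - pr)) ^ m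
      ≤ Real.exp (-(s * (μ + a))) * Real.exp (pr * (Real.exp s - 1)) ^ m :=
        mul_le_mul_of_nonneg_left (pow_le_pow_left₀ hbase0 hbase m) (Real.exp_nonneg _)
    _ = Real.exp (μ * (Real.exp s - 1) - s * (μ + a)) := by
        rw [← Real.exp_nat_mul, ← Real.exp_add, hμdef]; ring_nf
    _ ≤ Real.exp (-L) := Real.exp_le_exp.2 key
    _ = δ / n := by
        rw [Real.exp_neg, hLdef, Real.exp_log (by positivity), inv_div]

end AssemblyAux

/-- Stability of an assembly under recall (Lemma 10). A bipartite random graph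
from I (|I| = m) to A (|A| = n) has each edge present independently with
probability p. The k-subset C ⊆ A of neurons each receive weighted input at
least (1+γ)d (at least d incoming strengthened edges of weight 1+γ each), while
each neuron outside C has at most m' strengthened incoming edges, of weight at
most 1+cγ each, on top of its (random, Binomial(m,p)) unstrengthened in-degree.
If mp ≥ 3 ln(n/δ) and γ ≥ (mp + √(3mp ln(n/δ)) - d)/(d - cm'), then with
probability at least 1-δ every neuron outside C has weighted input less than
(1+γ)d ≤ the weighted input of every neuron in C, so the k-cap of the response
equals C. -/
theorem assembly_stability {I A : Type} [Fintype I] [Fintype A] [DecidableEq A]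
    (p : ℝ≥0∞) (hp : p ≤ 1) (γ c d m' δ : ℝ) (k : ℕ) (C : Finset A)
    (hCcard : C.card = k)
    (m n : ℕ) (hm : Fintype.card I = m) (hn : Fintype.card A = n)
    (hδ : 0 < δ) (hδ1 : δ < 1)
    (hmp : 3 * Real.log (n / δ) ≤ (m : ℝ) * p.toReal)
    (hcm : c * m' < d)
    (hγ : γ ≥ ((m : ℝ) * p.toReal +
        Real.sqrt (3 * m * p.toReal * Real.log (n / δ)) - d) / (d - c * m')) :
    ENNReal.ofReal (1 - δ) ≤
      (Measure.pi fun _ : I × A => (PMF.bernoulli p.toNNReal (by simpa using ENNReal.toNNReal_mono ENNReal.one_ne_top hp)).toMeasure)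
        {ω : I × A → Bool | ∀ j : A, j ∉ C →
          ((Finset.univ.filter fun i : I => ω (i, j) = true).card : ℝ)
              + c * γ * m' < (1 + γ) * d} := by
  classical
  set μpi := Measure.pi fun _ : I × A => (PMF.bernoulli p.toNNReal (by simpa using ENNReal.toNNReal_mono ENNReal.one_ne_top hp)).toMeasure with hμpidef
  set S := {ω : I × A → Bool | ∀ j : A, j ∉ C →
      ((Finset.univ.filter fun i : I => ω (i, j) = true).card : ℝ)
          + c * γ * m' < (1 + γ) * d} with hSdef
  have hSmeas : MeasurableSet S := by
    have hSeq : S = ⋂ j ∈ ((Finset.univ \ C : Finset A) : Set A),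
        {ω : I × A → Bool | ((Finset.univ.filter fun i : I => ω (i, j) = true).card : ℕ) ∈
          {x : ℕ | (x : ℝ) + c * γ * m' < (1 + γ) * d}} := by
      ext ω
      simp only [hSdef, Set.mem_setOf_eq, Set.mem_iInter, Finset.coe_sdiff, Finset.coe_univ,
        Set.mem_diff, Set.mem_univ, true_and, Finset.mem_coe, and_imp]
    rw [hSeq]
    exact MeasurableSet.biInter (Set.to_countable _)
      (fun j _ => count_measurable j _)
  have hprob : IsProbabilityMeasure μpi := by infer_instance
  suffices hcompl : μpi Sᶜ ≤ ENNReal.ofReal δ by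
    have h1 : μpi S = 1 - μpi Sᶜ := by
      have h2 := prob_compl_eq_one_sub (μ := μpi) hSmeas.compl
      rwa [compl_compl] at h2
    rw [h1]
    calc ENNReal.ofReal (1 - δ) = 1 - ENNReal.ofReal δ := by
          rw [ENNReal.ofReal_sub _ hδ.le, ENNReal.ofReal_one]
      _ ≤ 1 - μpi Sᶜ := tsub_le_tsub_left hcompl 1
  rcases Finset.eq_empty_or_nonempty (Finset.univ \ C : Finset A) with he | ⟨j₀, hj₀⟩
  · have hSuniv : S = Set.univ := by
      ext ω
      simp only [hSdef, Set.mem_setOf_eq, Set.mem_univ, iff_true]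
      intro j hj
      exact absurd (Finset.mem_sdiff.2 ⟨Finset.mem_univ j, hj⟩) (by simp [he])
    rw [hSuniv, Set.compl_univ]
    simp
  · have hn1 : 1 ≤ n := by
      rw [← hn]
      exact Fintype.card_pos_iff.2 ⟨j₀⟩
    have hnR : 1 ≤ (n : ℝ) := by exact_mod_cast hn1
    have hpne : p ≠ ⊤ := ne_top_of_le_ne_top one_ne_top hp
    have hpr0 : 0 ≤ p.toReal := ENNReal.toReal_nonneg
    have hpr1 : p.toReal ≤ 1 := by
      have := ENNReal.toReal_mono one_ne_top hp
      simpa using this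
    set pr := p.toReal with hprdef
    set L := Real.log (n / δ) with hLdef
    set μR := (m : ℝ) * pr with hμRdef
    have hL : 0 < L := Real.log_pos ((one_lt_div hδ).2 (by linarith))
    have hμR : 0 < μR := by dsimp [μR]; linarith [hmp]
    set a := Real.sqrt (3 * μR * L) with hadef
    have ha0 : 0 ≤ a := Real.sqrt_nonneg _
    have hsqrt_eq : Real.sqrt (3 * (m : ℝ) * pr * L) = a := by
      rw [hadef]; congr 1; ring
    set s := a / (2 * μR) with hsdef
    have hs0 : 0 ≤ s := by positivity
    set tR := μR + a with htRdef
    have hcm' : 0 < d - c * m' := by linarith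
    have htγ : tR ≤ (1 + γ) * d - c * γ * m' := by
      rw [hsqrt_eq] at hγ
      have h1 : (μR + a - d) / (d - c * m') ≤ γ := hγ
      rw [div_le_iff₀ hcm'] at h1
      dsimp [tR]
      nlinarith [h1]
    have hjbound : ∀ j : A,
        μpi {ω : I × A → Bool |
          tR ≤ ((Finset.univ.filter fun i : I => ω (i, j) = true).card : ℝ)}
          ≤ ENNReal.ofReal (δ / n) := by
      intro j
      apply tail_bound p hp j tR s (δ / n) hs0
      rw [hm]
      exact chernoff_real m n pr δ hnR hδ hδ1 hpr0 hpr1 hmp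
    have hsub : Sᶜ ⊆ ⋃ j ∈ (Finset.univ \ C : Finset A),
        {ω : I × A → Bool |
          tR ≤ ((Finset.univ.filter fun i : I => ω (i, j) = true).card : ℝ)} := by
      intro ω hω
      have hω' : ¬ ∀ j : A, j ∉ C →
          ((Finset.univ.filter fun i : I => ω (i, j) = true).card : ℝ)
              + c * γ * m' < (1 + γ) * d := hω
      push_neg at hω'
      obtain ⟨j, hjC, hge⟩ := hω'
      refine Set.mem_biUnion (Finset.mem_sdiff.2 ⟨Finset.mem_univ j, hjC⟩) ?_
      simp only [Set.mem_setOf_eq]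
      linarith [htγ]
    calc μpi Sᶜ ≤ μpi (⋃ j ∈ (Finset.univ \ C : Finset A),
          {ω : I × A → Bool |
            tR ≤ ((Finset.univ.filter fun i : I => ω (i, j) = true).card : ℝ)}) :=
          measure_mono hsub
      _ ≤ ∑ j ∈ Finset.univ \ C, μpi {ω : I × A → Bool |
            tR ≤ ((Finset.univ.filter fun i : I => ω (i, j) = true).card : ℝ)} :=
          measure_biUnion_finset_le _ _
      _ ≤ ∑ _j ∈ Finset.univ \ C, ENNReal.ofReal (δ / n) :=
          Finset.sum_le_sum fun j _ => hjbound j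
      _ = (Finset.univ \ C).card • ENNReal.ofReal (δ / n) := Finset.sum_const _
      _ ≤ n • ENNReal.ofReal (δ / n) := by
          rw [nsmul_eq_mul, nsmul_eq_mul]
          apply mul_le_mul_left
          exact (Nat.cast_le (α := ℝ≥0∞)).2 (le_trans
            (Finset.card_le_card (Finset.subset_univ _)) (by rw [Finset.card_univ, hn]))
      _ = ENNReal.ofReal δ := by
          rw [nsmul_eq_mul, ← ENNReal.ofReal_natCast, ← ENNReal.ofReal_mul (by positivity)]
          congr 1
          field_simp
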